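/- Let b₀, C₀ ∈ ℝ with b₀ ≠ 0, and let Y(z) = (b₀/10)·tanh(b₀z/10 + φ₀). Then y(z) = 3b₀²/25 + C₀ - (12/5)b₀Y(z) - 12Y(z)² satisfies the travelling-wave Korteweg–de Vries–Burgers equation y'' + (1/2)y² - b₀y' - C₀y - 18b₀⁴/625 + C₀²/2 = 0 on ℝ. -/

import Mathlib

lemma hasDerivAt_tanh' (x : ℝ) : HasDerivAt Real.tanh (1 - Real.tanh x ^ 2) x := by
  have hc : Real.cosh x ≠ 0 := ne_of_gt (Real.cosh_pos x)
  have h := (Real.hasDerivAt_sinh x).div (Real.hasDerivAt_cosh x) hc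
  have heq : (fun y => Real.sinh y / Real.cosh y) = Real.tanh := by
    funext y; rw [Real.tanh_eq_sinh_div_cosh]
  rw [show Real.sinh / Real.cosh = Real.tanh from heq] at h
  refine h.congr_deriv ?_
  have h1 : Real.cosh x ^ 2 - Real.sinh x ^ 2 = 1 := Real.cosh_sq_sub_sinh_sq x
  rw [Real.tanh_eq_sinh_div_cosh]
  field_simp

/-- Exact solution of the travelling-wave KdV–Burgers equation. -/
theorem kdv_burgers_exact_solution (b₀ C₀ φ₀ : ℝ) (hb : b₀ ≠ 0)
    (Y : ℝ → ℝ) (hYdef : Y = fun z => (b₀ / 10) * Real.tanh (b₀ * z / 10 + φ₀))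
    (y : ℝ → ℝ)
    (hydef : y = fun z => 3 * b₀ ^ 2 / 25 + C₀ - (12 / 5) * b₀ * Y z - 12 * (Y z) ^ 2) :
    ∀ z : ℝ,
      deriv (deriv y) z + (1 / 2) * (y z) ^ 2 - b₀ * deriv y z - C₀ * y z
        - 18 * b₀ ^ 4 / 625 + C₀ ^ 2 / 2 = 0 := by
  set u : ℝ → ℝ := fun z => Real.tanh (b₀ * z / 10 + φ₀) with hu_def
  have hu : ∀ z, HasDerivAt u ((b₀ / 10) * (1 - u z ^ 2)) z := by
    intro z
    have h1 : HasDerivAt (fun z : ℝ => b₀ * z / 10 + φ₀) (b₀ / 10) z := by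
      simpa [mul_comm] using (((hasDerivAt_id z).const_mul b₀).div_const 10).add_const φ₀
    have h2 := (hasDerivAt_tanh' (b₀ * z / 10 + φ₀)).comp z h1
    simpa [hu_def, mul_comm, Function.comp_def] using h2
  have hY : ∀ z, HasDerivAt Y ((b₀ / 10) * ((b₀ / 10) * (1 - u z ^ 2))) z := by
    intro z
    rw [hYdef]
    exact (hu z).const_mul _
  have hy : ∀ z, HasDerivAt y
      (-((12 / 5) * b₀ * ((b₀ / 10) * ((b₀ / 10) * (1 - u z ^ 2))))
        - 12 * (2 * Y z ^ 1 * ((b₀ / 10) * ((b₀ / 10) * (1 - u z ^ 2))))) z := by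
    intro z
    rw [hydef]
    have := ((hasDerivAt_const z (3 * b₀ ^ 2 / 25 + C₀)).sub ((hY z).const_mul ((12 / 5) * b₀))).sub
      (((hY z).pow 2).const_mul 12)
    refine this.congr_deriv ?_
    norm_num
  have hdy : deriv y = fun z =>
      -((12 / 5) * b₀ * ((b₀ / 10) * ((b₀ / 10) * (1 - u z ^ 2))))
        - 12 * (2 * Y z ^ 1 * ((b₀ / 10) * ((b₀ / 10) * (1 - u z ^ 2)))) := by
    funext z; exact (hy z).deriv
  have hYu : ∀ z, Y z = (b₀ / 10) * u z := by intro z; rw [hYdef]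
  have hdy2 : ∀ z, HasDerivAt (deriv y)
      (-((12 / 5) * b₀ * ((b₀ / 10) * ((b₀ / 10) * (-(2 * u z ^ 1 * ((b₀ / 10) * (1 - u z ^ 2)))))))
        - 12 * (2 * (((b₀ / 10) * ((b₀ / 10) * (1 - u z ^ 2))) * ((b₀ / 10) * ((b₀ / 10) * (1 - u z ^ 2)))
          + Y z * ((b₀ / 10) * ((b₀ / 10) * (-(2 * u z ^ 1 * ((b₀ / 10) * (1 - u z ^ 2))))))))) z := by
    intro z
    rw [hdy]
    have hu2 : HasDerivAt (fun z => 1 - u z ^ 2)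
        (-(2 * u z ^ 1 * ((b₀ / 10) * (1 - u z ^ 2)))) z := by
      refine ((hasDerivAt_const z (1:ℝ)).sub ((hu z).pow 2)).congr_deriv ?_
      simp
    have hA : HasDerivAt (fun z => (b₀ / 10) * ((b₀ / 10) * (1 - u z ^ 2)))
        ((b₀ / 10) * ((b₀ / 10) * (-(2 * u z ^ 1 * ((b₀ / 10) * (1 - u z ^ 2)))))) z :=
      (hu2.const_mul (b₀ / 10)).const_mul (b₀ / 10)
    have hB : HasDerivAt (fun z => Y z ^ 1 * ((b₀ / 10) * ((b₀ / 10) * (1 - u z ^ 2))))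
        (((b₀ / 10) * ((b₀ / 10) * (1 - u z ^ 2))) * ((b₀ / 10) * ((b₀ / 10) * (1 - u z ^ 2)))
          + Y z * ((b₀ / 10) * ((b₀ / 10) * (-(2 * u z ^ 1 * ((b₀ / 10) * (1 - u z ^ 2))))))) z := by
      have := ((hY z).pow 1).mul hA
      simpa [mul_comm, mul_assoc, mul_left_comm, Pi.mul_def] using this
    have := ((hA.const_mul ((12 / 5) * b₀)).neg).sub ((hB.const_mul 2).const_mul 12)
    refine HasDerivAt.congr_of_eventuallyEq this (Filter.Eventually.of_forall fun x => ?_)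
    simp only [Pi.sub_apply, Pi.neg_apply]
    ring
  intro z
  rw [(hdy2 z).deriv, hdy]
  simp only [hydef, hYu]
  ring
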